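/- Let T1 ∈ ℝ^{Nx×Nx}, T2 ∈ ℝ^{Ny×Ny}, define A = I_{Ny} ⊗ T1 + T2ᵀ ⊗ I_{Nx}, assume A is invertible, and let h_t ∈ ℝ. Let F be an Nx×Ny real matrix with f = vec(F), and set v = A^{−1}( exp(h_t A) f − f ). Then the Nx×Ny matrix V with vec(V) = v is a solution of the Sylvester equation T1 V + V T2 = G − F, where G = exp(h_t T1) · F · exp(h_t T2). -/

import Mathlib

open Matrix NormedSpace
open scoped Kronecker

/-- `_root_.vec` stacks the columns of an `Nx × Ny` matrix one after the other:
the component of `_root_.vec U` at index `(j, i)` is `U i j`. -/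
def vec {Nx Ny : ℕ} (U : Matrix (Fin Nx) (Fin Ny) ℝ) : Fin Ny × Fin Nx → ℝ :=
  fun p => U p.2 p.1


lemma vec_injective {Nx Ny : ℕ} : Function.Injective (vec (Nx := Nx) (Ny := Ny)) := by
  intro U W h
  ext i j
  exact congrFun h (j, i)

lemma vec_sub {Nx Ny : ℕ} (U W : Matrix (Fin Nx) (Fin Ny) ℝ) :
    _root_.vec (U - W) = _root_.vec U - _root_.vec W := rfl

lemma kron_mulVec {Nx Ny : ℕ} (B : Matrix (Fin Ny) (Fin Ny) ℝ) (C : Matrix (Fin Nx) (Fin Nx) ℝ)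
    (U : Matrix (Fin Nx) (Fin Ny) ℝ) :
    (B ⊗ₖ C).mulVec (_root_.vec U) = _root_.vec (C * U * Bᵀ) := by
  funext p
  simp only [mulVec, _root_.vec, dotProduct, kroneckerMap_apply, Matrix.mul_apply, transpose_apply]
  rw [Fintype.sum_prod_type]
  simp only [Finset.sum_mul]
  exact Finset.sum_congr rfl fun a _ => Finset.sum_congr rfl fun b _ => by ring

def leftHom (Nx Ny : ℕ) : Matrix (Fin Nx) (Fin Nx) ℝ →+* Matrix (Fin Ny × Fin Nx) (Fin Ny × Fin Nx) ℝ where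
  toFun X := (1 : Matrix (Fin Ny) (Fin Ny) ℝ) ⊗ₖ X
  map_one' := Matrix.one_kronecker_one
  map_mul' X Y := by rw [← Matrix.mul_kronecker_mul, Matrix.one_mul]
  map_zero' := Matrix.kronecker_zero _
  map_add' X Y := Matrix.kronecker_add _ _ _

def rightHom (Nx Ny : ℕ) : Matrix (Fin Ny) (Fin Ny) ℝ →+* Matrix (Fin Ny × Fin Nx) (Fin Ny × Fin Nx) ℝ where
  toFun Y := Y ⊗ₖ (1 : Matrix (Fin Nx) (Fin Nx) ℝ)
  map_one' := Matrix.one_kronecker_one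
  map_mul' X Y := by rw [← Matrix.mul_kronecker_mul, Matrix.one_mul]
  map_zero' := Matrix.zero_kronecker _
  map_add' X Y := Matrix.add_kronecker _ _ _

lemma exp_kron {Nx Ny : ℕ} (T1 : Matrix (Fin Nx) (Fin Nx) ℝ) (T2 : Matrix (Fin Ny) (Fin Ny) ℝ) (ht : ℝ) :
    exp (ht • ((1 : Matrix (Fin Ny) (Fin Ny) ℝ) ⊗ₖ T1 + T2ᵀ ⊗ₖ (1 : Matrix (Fin Nx) (Fin Nx) ℝ)))
      = (exp (ht • T2))ᵀ ⊗ₖ exp (ht • T1) := by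
  have e1 : ht • ((1 : Matrix (Fin Ny) (Fin Ny) ℝ) ⊗ₖ T1) = (1 : Matrix (Fin Ny) (Fin Ny) ℝ) ⊗ₖ (ht • T1) :=
    (Matrix.kronecker_smul _ _ _).symm
  have e2 : ht • (T2ᵀ ⊗ₖ (1 : Matrix (Fin Nx) (Fin Nx) ℝ)) = (ht • T2ᵀ) ⊗ₖ (1 : Matrix (Fin Nx) (Fin Nx) ℝ) :=
    (Matrix.smul_kronecker _ _ _).symm
  have hc : Commute ((1 : Matrix (Fin Ny) (Fin Ny) ℝ) ⊗ₖ (ht • T1)) ((ht • T2ᵀ) ⊗ₖ (1 : Matrix (Fin Nx) (Fin Nx) ℝ)) := by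
    unfold Commute SemiconjBy
    rw [← Matrix.mul_kronecker_mul, ← Matrix.mul_kronecker_mul, Matrix.one_mul, Matrix.mul_one,
      Matrix.one_mul, Matrix.mul_one]
  have h1 : exp ((1 : Matrix (Fin Ny) (Fin Ny) ℝ) ⊗ₖ (ht • T1)) = (1 : Matrix (Fin Ny) (Fin Ny) ℝ) ⊗ₖ exp (ht • T1) := by
    letI : SeminormedRing (Matrix (Fin Nx) (Fin Nx) ℝ) := Matrix.linftyOpSemiNormedRing
    letI : NormedRing (Matrix (Fin Nx) (Fin Nx) ℝ) := Matrix.linftyOpNormedRing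
    letI : NormedAlgebra ℝ (Matrix (Fin Nx) (Fin Nx) ℝ) := Matrix.linftyOpNormedAlgebra
    letI : SeminormedRing (Matrix (Fin Ny × Fin Nx) (Fin Ny × Fin Nx) ℝ) := Matrix.linftyOpSemiNormedRing
    letI : NormedRing (Matrix (Fin Ny × Fin Nx) (Fin Ny × Fin Nx) ℝ) := Matrix.linftyOpNormedRing
    letI : NormedAlgebra ℝ (Matrix (Fin Ny × Fin Nx) (Fin Ny × Fin Nx) ℝ) := Matrix.linftyOpNormedAlgebra
    have hcont : Continuous (leftHom Nx Ny) := by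
      have : ⇑(leftHom Nx Ny) = fun X : Matrix (Fin Nx) (Fin Nx) ℝ =>
          kroneckerMap (· * ·) (1 : Matrix (Fin Ny) (Fin Ny) ℝ) X := rfl
      have h2 : ⇑(leftHom Nx Ny) = ⇑((kroneckerBilinear : Matrix (Fin Ny) (Fin Ny) ℝ →ₗ[ℝ] Matrix (Fin Nx) (Fin Nx) ℝ →ₗ[ℝ] Matrix (Fin Ny × Fin Nx) (Fin Ny × Fin Nx) ℝ) 1) := rfl
      rw [h2]
      exact LinearMap.continuous_of_finiteDimensional _
    letI : NormedAlgebra ℚ (Matrix (Fin Nx) (Fin Nx) ℝ) := NormedAlgebra.restrictScalars ℚ ℝ _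
    letI : NormedAlgebra ℚ (Matrix (Fin Ny × Fin Nx) (Fin Ny × Fin Nx) ℝ) := NormedAlgebra.restrictScalars ℚ ℝ _
    exact (map_exp (leftHom Nx Ny) hcont (ht • T1)).symm
  have h2 : exp ((ht • T2ᵀ) ⊗ₖ (1 : Matrix (Fin Nx) (Fin Nx) ℝ)) = (exp (ht • T2ᵀ)) ⊗ₖ (1 : Matrix (Fin Nx) (Fin Nx) ℝ) := by
    letI : SeminormedRing (Matrix (Fin Ny) (Fin Ny) ℝ) := Matrix.linftyOpSemiNormedRing
    letI : NormedRing (Matrix (Fin Ny) (Fin Ny) ℝ) := Matrix.linftyOpNormedRing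
    letI : NormedAlgebra ℝ (Matrix (Fin Ny) (Fin Ny) ℝ) := Matrix.linftyOpNormedAlgebra
    letI : SeminormedRing (Matrix (Fin Ny × Fin Nx) (Fin Ny × Fin Nx) ℝ) := Matrix.linftyOpSemiNormedRing
    letI : NormedRing (Matrix (Fin Ny × Fin Nx) (Fin Ny × Fin Nx) ℝ) := Matrix.linftyOpNormedRing
    letI : NormedAlgebra ℝ (Matrix (Fin Ny × Fin Nx) (Fin Ny × Fin Nx) ℝ) := Matrix.linftyOpNormedAlgebra
    have hcont : Continuous (rightHom Nx Ny) := by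
      have : ⇑(rightHom Nx Ny) = fun Y : Matrix (Fin Ny) (Fin Ny) ℝ =>
          kroneckerMap (· * ·) Y (1 : Matrix (Fin Nx) (Fin Nx) ℝ) := rfl
      have h2 : ⇑(rightHom Nx Ny) = ⇑((kroneckerBilinear : Matrix (Fin Ny) (Fin Ny) ℝ →ₗ[ℝ] Matrix (Fin Nx) (Fin Nx) ℝ →ₗ[ℝ] Matrix (Fin Ny × Fin Nx) (Fin Ny × Fin Nx) ℝ).flip 1) := rfl
      rw [h2]
      exact LinearMap.continuous_of_finiteDimensional _
    letI : NormedAlgebra ℚ (Matrix (Fin Ny) (Fin Ny) ℝ) := NormedAlgebra.restrictScalars ℚ ℝ _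
    letI : NormedAlgebra ℚ (Matrix (Fin Ny × Fin Nx) (Fin Ny × Fin Nx) ℝ) := NormedAlgebra.restrictScalars ℚ ℝ _
    exact (map_exp (rightHom Nx Ny) hcont (ht • T2ᵀ)).symm
  rw [smul_add, e1, e2, Matrix.exp_add_of_commute _ _ hc, h1, h2,
    ← Matrix.mul_kronecker_mul, Matrix.one_mul, Matrix.mul_one]
  rw [← Matrix.transpose_smul, Matrix.exp_transpose]


/-- With `A = I ⊗ T1 + T2ᵀ ⊗ I` invertible, `f = _root_.vec F` and
`v = A⁻¹(exp(h_t A) f − f)`, the matrix `V` with `_root_.vec(V) = v` solves the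
Sylvester equation `T1 V + V T2 = G − F`, where `G = exp(h_t T1) F exp(h_t T2)`. -/
theorem phi_vec_solves_sylvester {Nx Ny : ℕ}
    (T1 : Matrix (Fin Nx) (Fin Nx) ℝ) (T2 : Matrix (Fin Ny) (Fin Ny) ℝ)
    (A : Matrix (Fin Ny × Fin Nx) (Fin Ny × Fin Nx) ℝ)
    (hA : A = (1 : Matrix (Fin Ny) (Fin Ny) ℝ) ⊗ₖ T1 + T2ᵀ ⊗ₖ (1 : Matrix (Fin Nx) (Fin Nx) ℝ))
    (hAinv : IsUnit A.det) (ht : ℝ)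
    (F V : Matrix (Fin Nx) (Fin Ny) ℝ)
    (f v : Fin Ny × Fin Nx → ℝ) (hf : f = _root_.vec F)
    (hv : v = A⁻¹.mulVec ((exp (ht • A)).mulVec f - f))
    (hV : _root_.vec V = v)
    (G : Matrix (Fin Nx) (Fin Ny) ℝ)
    (hG : G = exp (ht • T1) * F * exp (ht • T2)) :
    T1 * V + V * T2 = G - F := by
  apply vec_injective
  -- key: A.mulVec (_root_.vec U) = _root_.vec (T1 * U + U * T2)
  have hAmul : ∀ U : Matrix (Fin Nx) (Fin Ny) ℝ, A.mulVec (_root_.vec U) = _root_.vec (T1 * U + U * T2) := by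
    intro U
    rw [hA, Matrix.add_mulVec, kron_mulVec, kron_mulVec]
    funext p
    simp [_root_.vec, Matrix.mul_apply]
  have hexp : (exp (ht • A)).mulVec f = _root_.vec G := by
    rw [hA, exp_kron, hf, kron_mulVec, Matrix.transpose_transpose, hG]
  have hAv : A.mulVec v = _root_.vec G - _root_.vec F := by
    rw [hv, Matrix.mulVec_mulVec, Matrix.mul_nonsing_inv _ hAinv, Matrix.one_mulVec, hexp, hf]
  rw [hAmul V |>.symm.trans (by rw [hV, hAv]), vec_sub]
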